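/- arXiv:2206.01252 — 2 statements merged into one kernel-verified Lean document; each statement's English description precedes it below -/
import Mathlib

section
/- Let δ > 0, let X be a nonempty set, and let q_{ij} : X → ℝ, for distinct i, j ∈ ℕ₊ = {1,2,…}, be functions satisfying 0 < c₁ ≤ j^{1+δ} q_{ij}(x) ≤ c₂ < ∞ for all x ∈ X and all distinct i, j, for some constants c₁, c₂. Define f(i) = i^{δ/2}. Then: (i) sup_{x ∈ X, i ∈ ℕ₊} Σ_{j ≠ i} q_{ij}(x) < ∞ (condition (Q0)); (ii) sup_{x ∈ X, i ∈ ℕ₊} Σ_{j ≠ i} (f(j) - f(i)) q_{ij}(x) < ∞; and (iii) lim_{i → ∞} sup_{x ∈ X} Σ_{j ≠ i} (f(j) - f(i)) q_{ij}(x) = -∞. In particular condition (Q2) holds with f(i) = i^{δ/2}. -/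
theorem stmt_4 (δ : ℝ) (hδ : 0 < δ) (X : Type*) [Nonempty X]
    (q : ℕ+ → ℕ+ → X → ℝ) (c₁ c₂ : ℝ) (hc₁ : 0 < c₁)
    (hbound : ∀ (x : X) (i j : ℕ+), i ≠ j →
      c₁ ≤ ((j : ℝ)) ^ (1 + δ) * q i j x ∧ ((j : ℝ)) ^ (1 + δ) * q i j x ≤ c₂) :
    (∀ (x : X) (i : ℕ+), Summable (fun j : {j : ℕ+ // j ≠ i} => q i j x)) ∧
    (∃ M : ℝ, ∀ (x : X) (i : ℕ+), (∑' j : {j : ℕ+ // j ≠ i}, q i j x) ≤ M) ∧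
    (∀ (x : X) (i : ℕ+), Summable
      (fun j : {j : ℕ+ // j ≠ i} =>
        (((j : ℕ+) : ℝ) ^ (δ / 2) - ((i : ℝ)) ^ (δ / 2)) * q i j x)) ∧
    (∃ M : ℝ, ∀ (x : X) (i : ℕ+),
      (∑' j : {j : ℕ+ // j ≠ i},
        (((j : ℕ+) : ℝ) ^ (δ / 2) - ((i : ℝ)) ^ (δ / 2)) * q i j x) ≤ M) ∧
    (∀ C : ℝ, ∃ N : ℕ+, ∀ i : ℕ+, N ≤ i → ∀ x : X,
      (∑' j : {j : ℕ+ // j ≠ i},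
        (((j : ℕ+) : ℝ) ^ (δ / 2) - ((i : ℝ)) ^ (δ / 2)) * q i j x) ≤ C) := by
  -- basic positivity facts
  have hjpos : ∀ j : ℕ+, (0:ℝ) < (j:ℝ) := fun j => by exact_mod_cast j.pos
  have hpow : ∀ j : ℕ+, (0:ℝ) < (j:ℝ) ^ (1+δ) :=
    fun j => Real.rpow_pos_of_pos (hjpos j) _
  -- bounds on q
  have hc₂ : 0 < c₂ := by
    obtain ⟨x₀⟩ := ‹Nonempty X›
    have h := hbound x₀ 1 2 (by decide)
    linarith
  have hqeq : ∀ (x : X) (i j : ℕ+),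
      q i j x = ((j:ℝ) ^ (1+δ))⁻¹ * ((j:ℝ) ^ (1+δ) * q i j x) := by
    intro x i j
    field_simp
  have hqub : ∀ (x : X) (i j : ℕ+), i ≠ j → q i j x ≤ c₂ * ((j:ℝ) ^ (1+δ))⁻¹ := by
    intro x i j hij
    have h := (hbound x i j hij).2
    rw [hqeq x i j]
    calc ((j:ℝ) ^ (1+δ))⁻¹ * ((j:ℝ) ^ (1+δ) * q i j x)
        ≤ ((j:ℝ) ^ (1+δ))⁻¹ * c₂ :=
          mul_le_mul_of_nonneg_left h (by positivity)
      _ = c₂ * ((j:ℝ) ^ (1+δ))⁻¹ := by ring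
  have hqlb : ∀ (x : X) (i j : ℕ+), i ≠ j → c₁ * ((j:ℝ) ^ (1+δ))⁻¹ ≤ q i j x := by
    intro x i j hij
    have h := (hbound x i j hij).1
    rw [hqeq x i j]
    calc c₁ * ((j:ℝ) ^ (1+δ))⁻¹ = ((j:ℝ) ^ (1+δ))⁻¹ * c₁ := by ring
      _ ≤ ((j:ℝ) ^ (1+δ))⁻¹ * ((j:ℝ) ^ (1+δ) * q i j x) :=
          mul_le_mul_of_nonneg_left h (by positivity)
  have hqnn : ∀ (x : X) (i j : ℕ+), i ≠ j → 0 ≤ q i j x := by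
    intro x i j hij
    have := hqlb x i j hij
    have : 0 < c₁ * ((j:ℝ) ^ (1+δ))⁻¹ := by positivity
    linarith [hqlb x i j hij]
  -- summable majorants on ℕ+
  have hsum_pnat : ∀ p : ℝ, 1 < p → Summable (fun j : ℕ+ => ((j:ℝ) ^ p)⁻¹) := by
    intro p hp
    have h := (Real.summable_nat_rpow_inv (p := p)).mpr hp
    have h2 := h.comp_injective (i := ((↑) : ℕ+ → ℕ)) (fun a b hab => PNat.coe_injective hab)
    have heq : (fun j : ℕ+ => ((j:ℝ) ^ p)⁻¹)
        = (fun n : ℕ => ((n:ℝ) ^ p)⁻¹) ∘ ((↑) : ℕ+ → ℕ) := by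
      funext j; simp
    rw [heq]; exact h2
  have hS1 : Summable (fun j : ℕ+ => ((j:ℝ) ^ (1+δ))⁻¹) := hsum_pnat _ (by linarith)
  have hS2 : Summable (fun j : ℕ+ => ((j:ℝ) ^ (1+δ/2))⁻¹) := hsum_pnat _ (by linarith)
  -- key rpow identity
  have hkey : ∀ j : ℕ+, (j:ℝ) ^ (δ/2) * ((j:ℝ) ^ (1+δ))⁻¹ = ((j:ℝ) ^ (1+δ/2))⁻¹ := by
    intro j
    rw [← Real.rpow_neg (hjpos j).le, ← Real.rpow_neg (hjpos j).le,
      ← Real.rpow_add (hjpos j)]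
    ring_nf
  -- summability of q over the subtype
  have hsq : ∀ (x : X) (i : ℕ+), Summable (fun j : {j : ℕ+ // j ≠ i} => q i j x) := by
    intro x i
    have hmaj : Summable (fun j : {j : ℕ+ // j ≠ i} => c₂ * (((j:ℕ+):ℝ) ^ (1+δ))⁻¹) :=
      ((hS1.mul_left c₂).subtype {j | j ≠ i})
    exact Summable.of_nonneg_of_le (fun j => hqnn x i j (Ne.symm j.2))
      (fun j => hqub x i j (Ne.symm j.2)) hmaj
  -- summability of the weighted sums
  have hsf : ∀ (x : X) (i : ℕ+),
      Summable (fun j : {j : ℕ+ // j ≠ i} => ((j:ℕ+):ℝ) ^ (δ/2) * q i j x) := by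
    intro x i
    have hmaj : Summable (fun j : {j : ℕ+ // j ≠ i} => c₂ * (((j:ℕ+):ℝ) ^ (1+δ/2))⁻¹) :=
      ((hS2.mul_left c₂).subtype {j | j ≠ i})
    refine Summable.of_nonneg_of_le (fun j => ?_) (fun j => ?_) hmaj
    · have := hqnn x i j (Ne.symm j.2)
      positivity
    · have h1 := hqub x i j (Ne.symm j.2)
      have h2 : (0:ℝ) ≤ ((j:ℕ+):ℝ) ^ (δ/2) := (Real.rpow_pos_of_pos (hjpos j) _).le
      calc ((j:ℕ+):ℝ) ^ (δ/2) * q i j x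
          ≤ ((j:ℕ+):ℝ) ^ (δ/2) * (c₂ * (((j:ℕ+):ℝ) ^ (1+δ))⁻¹) := by
            exact mul_le_mul_of_nonneg_left h1 h2
        _ = c₂ * (((j:ℕ+):ℝ) ^ (1+δ/2))⁻¹ := by
            rw [← hkey (j:ℕ+)]; ring
  have hsw : ∀ (x : X) (i : ℕ+),
      Summable (fun j : {j : ℕ+ // j ≠ i} =>
        (((j : ℕ+) : ℝ) ^ (δ / 2) - ((i : ℝ)) ^ (δ / 2)) * q i j x) := by
    intro x i
    have := (hsf x i).sub (((hsq x i).mul_left ((i:ℝ) ^ (δ/2))))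
    convert this using 2 with j
    · rfl
    ring
  -- tsum over subtype ≤ tsum over ℕ+ for q's majorant
  have htsum_q_le : ∀ (x : X) (i : ℕ+),
      (∑' j : {j : ℕ+ // j ≠ i}, q i j x) ≤ c₂ * ∑' j : ℕ+, ((j:ℝ) ^ (1+δ))⁻¹ := by
    intro x i
    rw [← tsum_mul_left]
    refine Summable.tsum_le_tsum_of_inj (Subtype.val) Subtype.val_injective
      (fun c _ => mul_nonneg hc₂.le (by positivity)) (fun j => hqub x i j (Ne.symm j.2)) (hsq x i)
      (hS1.mul_left c₂)
  have htsum_f_le : ∀ (x : X) (i : ℕ+),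
      (∑' j : {j : ℕ+ // j ≠ i}, ((j:ℕ+):ℝ) ^ (δ/2) * q i j x)
        ≤ c₂ * ∑' j : ℕ+, ((j:ℝ) ^ (1+δ/2))⁻¹ := by
    intro x i
    rw [← tsum_mul_left]
    refine Summable.tsum_le_tsum_of_inj (Subtype.val) Subtype.val_injective
      (fun c _ => mul_nonneg hc₂.le (by positivity)) (fun j => ?_) (hsf x i) (hS2.mul_left c₂)
    have h1 := hqub x i j (Ne.symm j.2)
    have h2 : (0:ℝ) ≤ ((j:ℕ+):ℝ) ^ (δ/2) := (Real.rpow_pos_of_pos (hjpos j) _).le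
    calc ((j:ℕ+):ℝ) ^ (δ/2) * q i j x
        ≤ ((j:ℕ+):ℝ) ^ (δ/2) * (c₂ * (((j:ℕ+):ℝ) ^ (1+δ))⁻¹) :=
          mul_le_mul_of_nonneg_left h1 h2
      _ = c₂ * (((j:ℕ+):ℝ) ^ (1+δ/2))⁻¹ := by rw [← hkey (j:ℕ+)]; ring
  -- split of the weighted tsum
  have hsplit : ∀ (x : X) (i : ℕ+),
      (∑' j : {j : ℕ+ // j ≠ i},
        (((j : ℕ+) : ℝ) ^ (δ / 2) - ((i : ℝ)) ^ (δ / 2)) * q i j x)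
      = (∑' j : {j : ℕ+ // j ≠ i}, ((j:ℕ+):ℝ) ^ (δ/2) * q i j x)
        - (i:ℝ) ^ (δ/2) * (∑' j : {j : ℕ+ // j ≠ i}, q i j x) := by
    intro x i
    rw [← tsum_mul_left, ← Summable.tsum_sub (hsf x i) ((hsq x i).mul_left _)]
    congr 1; funext j; ring
  set S2 : ℝ := ∑' j : ℕ+, ((j:ℝ) ^ (1+δ/2))⁻¹ with hS2def
  -- weighted tsum upper bound usable everywhere: drop the negative part
  have hWle : ∀ (x : X) (i : ℕ+),
      (∑' j : {j : ℕ+ // j ≠ i},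
        (((j : ℕ+) : ℝ) ^ (δ / 2) - ((i : ℝ)) ^ (δ / 2)) * q i j x)
      ≤ c₂ * S2 - (i:ℝ) ^ (δ/2) * (∑' j : {j : ℕ+ // j ≠ i}, q i j x) := by
    intro x i
    rw [hsplit x i]
    have := htsum_f_le x i
    linarith
  have htsum_q_nn : ∀ (x : X) (i : ℕ+), 0 ≤ ∑' j : {j : ℕ+ // j ≠ i}, q i j x :=
    fun x i => tsum_nonneg (fun j => hqnn x i j (Ne.symm j.2))
  refine ⟨hsq, ⟨c₂ * ∑' j : ℕ+, ((j:ℝ) ^ (1+δ))⁻¹, htsum_q_le⟩, hsw,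
    ⟨c₂ * S2, fun x i => ?_⟩, ?_⟩
  · have h1 := hWle x i
    have h2 : 0 ≤ (i:ℝ) ^ (δ/2) * (∑' j : {j : ℕ+ // j ≠ i}, q i j x) := by
      have := htsum_q_nn x i
      positivity
    linarith
  · intro C
    -- choose N : need i^{δ/2} ≥ (c₂ S2 - C)/c₁ and i ≥ 2
    obtain ⟨m, hm⟩ := (tendsto_rpow_atTop (y := δ/2) (by linarith)).eventually_ge_atTop
      ((c₂ * S2 - C) / c₁) |>.exists_forall_of_atTop
    obtain ⟨n, hn⟩ := exists_nat_ge (max m 2)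
    have hn2 : (2:ℝ) ≤ (n:ℝ) := le_trans (le_max_right m 2) hn
    have hnpos : 0 < n := by exact_mod_cast lt_of_lt_of_le (by norm_num : (0:ℝ) < 2) hn2
    refine ⟨⟨n, hnpos⟩, fun i hi x => ?_⟩
    have hiN : (n:ℝ) ≤ (i:ℝ) := by exact_mod_cast (PNat.coe_le_coe _ _).mpr hi
    have hi2 : (2:ℝ) ≤ (i:ℝ) := le_trans hn2 hiN
    have h1i : (1:ℕ+) ≠ i := by
      intro h
      rw [← h] at hi2
      norm_num at hi2
    -- lower bound on tsum q: the j = 1 term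
    have hterm : c₁ ≤ q i 1 x := by
      have := hqlb x i 1 (Ne.symm h1i)
      simpa [Real.one_rpow] using this
    have hlow : c₁ ≤ ∑' j : {j : ℕ+ // j ≠ i}, q i j x := by
      have := Summable.le_tsum (hsq x i) ⟨1, h1i⟩ (fun j _ => hqnn x i j (Ne.symm j.2))
      exact le_trans hterm this
    have hipow : (c₂ * S2 - C) / c₁ ≤ (i:ℝ) ^ (δ/2) :=
      hm (i:ℝ) (le_trans (le_trans (le_max_left m 2) hn) hiN)
    have hipow' : c₂ * S2 - C ≤ c₁ * (i:ℝ) ^ (δ/2) := by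
      rw [div_le_iff₀ hc₁] at hipow
      linarith
    have hipow_nn : (0:ℝ) ≤ (i:ℝ) ^ (δ/2) := (Real.rpow_pos_of_pos (hjpos i) _).le
    have h2 : c₁ * (i:ℝ) ^ (δ/2) ≤ (i:ℝ) ^ (δ/2) * (∑' j : {j : ℕ+ // j ≠ i}, q i j x) := by
      calc c₁ * (i:ℝ) ^ (δ/2) = (i:ℝ) ^ (δ/2) * c₁ := by ring
        _ ≤ _ := mul_le_mul_of_nonneg_left hlow hipow_nn
    have := hWle x i
    linarith
end

section
/- Let m ∈ ℕ₊, M > 0, let X be a nonempty set, and let q_{ij} : X → ℝ, for distinct i, j ∈ ℕ₊ = {1,2,…}, satisfy: q_{ij}(x) = 0 whenever |i - j| > m; q_{ij}(x) ∈ (0, M] whenever 0 < |i - j| ≤ m; and α := inf{q_{ij}(x) : x ∈ X, i > m, i - m ≤ j ≤ i - 1} > β := sup{q_{ij}(x) : x ∈ X, i > m, i + 1 ≤ j ≤ i + m}. Then with f(i) = i²: (i) sup_{x ∈ X, i ∈ ℕ₊} Σ_{j ≠ i} q_{ij}(x) ≤ 2mM (condition (Q0)); (ii) sup_{x ∈ X,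 i ∈ ℕ₊} Σ_{j ≠ i} (f(j) - f(i)) q_{ij}(x) < ∞; and (iii) lim_{i → ∞} sup_{x ∈ X} Σ_{j ≠ i} (f(j) - f(i)) q_{ij}(x) = -∞. In particular condition (Q2) holds with f(i) = i². -/
lemma aux_band (m : ℕ) (i : ℕ+) (Q : ℕ+ → ℝ)
    (hQ : ∀ j : ℕ+, ((j : ℕ) < (i : ℕ) - m ∨ (i : ℕ) + m < (j : ℕ)) → Q j = 0) :
    Summable (fun j : {j : ℕ+ // j ≠ i} => Q j.1) ∧
    (∑' j : {j : ℕ+ // j ≠ i}, Q j.1) =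
      ∑ j ∈ (Finset.Icc ((i : ℕ) - m) ((i : ℕ) + m)).erase (i : ℕ),
        (if h : 0 < j then Q ⟨j, h⟩ else 0) := by
  classical
  set s0 : Finset ℕ := (Finset.Icc ((i : ℕ) - m) ((i : ℕ) + m)).erase (i : ℕ) with hs0
  have hinj : Set.InjOn (fun b : {j : ℕ+ // j ≠ i} => ((b.1 : ℕ+) : ℕ))
      ((fun b : {j : ℕ+ // j ≠ i} => ((b.1 : ℕ+) : ℕ)) ⁻¹' ↑s0) := by
    intro a _ b _ h
    exact Subtype.ext (PNat.coe_injective h)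
  set sS := s0.preimage (fun b : {j : ℕ+ // j ≠ i} => ((b.1 : ℕ+) : ℕ)) hinj with hsS
  have hvan : ∀ b : {j : ℕ+ // j ≠ i}, b ∉ sS → Q b.1 = 0 := by
    intro b hb
    rw [hsS, Finset.mem_preimage] at hb
    have hb1 : ((b.1 : ℕ)) ≠ (i : ℕ) := fun h => b.2 (PNat.coe_injective h)
    rw [hs0] at hb
    simp only [Finset.mem_erase, Finset.mem_Icc] at hb
    apply hQ
    omega
  refine ⟨summable_of_ne_finset_zero hvan, ?_⟩
  rw [tsum_eq_sum hvan]
  rw [← Finset.sum_preimage (fun b : {j : ℕ+ // j ≠ i} => ((b.1 : ℕ+) : ℕ)) s0 hinj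
    (fun j => if h : 0 < j then Q ⟨j, h⟩ else 0) ?_]
  · refine Finset.sum_congr rfl fun b _ => ?_
    split
    · rfl
    · next h => exact absurd b.1.property h
  · intro x hx hxr
    rw [hs0] at hx
    simp only [Finset.mem_erase, Finset.mem_Icc] at hx
    rcases Nat.eq_zero_or_pos x with h0 | h0
    · show (if h : 0 < x then Q ⟨x, h⟩ else 0) = 0
      rw [dif_neg (by omega)]
    · exact absurd ⟨⟨⟨x, h0⟩, fun h => hx.1 (congrArg PNat.val h)⟩, rfl⟩ hxr

set_option maxHeartbeats 1000000

theorem stmt_5 (m : ℕ+) (M : ℝ) (hM : 0 < M) (X : Type*) [Nonempty X]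
    (q : ℕ+ → ℕ+ → X → ℝ)
    (hzero : ∀ (x : X) (i j : ℕ+), i ≠ j → (m : ℤ) < |(i : ℤ) - (j : ℤ)| → q i j x = 0)
    (hband : ∀ (x : X) (i j : ℕ+), i ≠ j → |(i : ℤ) - (j : ℤ)| ≤ (m : ℤ) →
      0 < q i j x ∧ q i j x ≤ M)
    (α β : ℝ) (hαβ : β < α)
    (hα : ∀ (x : X) (i j : ℕ+), (m : ℕ) < (i : ℕ) →
      (i : ℤ) - (m : ℤ) ≤ (j : ℤ) → (j : ℤ) ≤ (i : ℤ) - 1 → α ≤ q i j x)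
    (hβ : ∀ (x : X) (i j : ℕ+), (m : ℕ) < (i : ℕ) →
      (i : ℤ) + 1 ≤ (j : ℤ) → (j : ℤ) ≤ (i : ℤ) + (m : ℤ) → q i j x ≤ β) :
    (∀ (x : X) (i : ℕ+), Summable (fun j : {j : ℕ+ // j ≠ i} => q i j x)) ∧
    (∀ (x : X) (i : ℕ+), (∑' j : {j : ℕ+ // j ≠ i}, q i j x) ≤ 2 * (m : ℝ) * M) ∧
    (∀ (x : X) (i : ℕ+), Summable
      (fun j : {j : ℕ+ // j ≠ i} => (((j : ℕ+) : ℝ) ^ 2 - ((i : ℝ)) ^ 2) * q i j x)) ∧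
    (∃ C : ℝ, ∀ (x : X) (i : ℕ+),
      (∑' j : {j : ℕ+ // j ≠ i}, (((j : ℕ+) : ℝ) ^ 2 - ((i : ℝ)) ^ 2) * q i j x) ≤ C) ∧
    (∀ C : ℝ, ∃ N : ℕ+, ∀ i : ℕ+, N ≤ i → ∀ x : X,
      (∑' j : {j : ℕ+ // j ≠ i}, (((j : ℕ+) : ℝ) ^ 2 - ((i : ℝ)) ^ 2) * q i j x) ≤ C) := by
  classical
  have hm1 : 1 ≤ (m : ℕ) := m.property
  -- positivity of β and α
  have hβpos : 0 < β := by
    obtain ⟨x₀⟩ := ‹Nonempty X›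
    have hne : (m + 1 : ℕ+) ≠ (m + 2 : ℕ+) := by
      intro h
      have h2 := congrArg PNat.val h
      have e1 : ((m + 1 : ℕ+) : ℕ) = (m : ℕ) + 1 := rfl
      have e2 : ((m + 2 : ℕ+) : ℕ) = (m : ℕ) + 2 := rfl
      rw [e1, e2] at h2
      omega
    have habs : |((m + 1 : ℕ+) : ℤ) - ((m + 2 : ℕ+) : ℤ)| ≤ (m : ℤ) := by
      show |(((m : ℕ) + 1 : ℕ) : ℤ) - (((m : ℕ) + 2 : ℕ) : ℤ)| ≤ (((m : ℕ) : ℕ) : ℤ)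
      rw [abs_sub_comm, abs_of_nonneg (by omega)]
      omega
    have hpos := (hband x₀ (m + 1) (m + 2) hne habs).1
    have hle : q (m + 1) (m + 2) x₀ ≤ β := by
      refine hβ x₀ (m + 1) (m + 2) ?_ ?_ ?_
      · show (m : ℕ) < ((m : ℕ) + 1 : ℕ)
        omega
      · show (((m : ℕ) + 1 : ℕ) : ℤ) + 1 ≤ (((m : ℕ) + 2 : ℕ) : ℤ)
        omega
      · show (((m : ℕ) + 2 : ℕ) : ℤ) ≤ (((m : ℕ) + 1 : ℕ) : ℤ) + (((m : ℕ) : ℕ) : ℤ)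
        omega
    linarith
  have hαpos : 0 < α := lt_trans hβpos hαβ
  have hab : 0 ≤ α + β := by linarith
  -- restated hypotheses in ℕ form
  have hvanq : ∀ (x : X) (i j : ℕ+),
      ((j : ℕ) < (i : ℕ) - (m : ℕ) ∨ (i : ℕ) + (m : ℕ) < (j : ℕ)) → q i j x = 0 := by
    intro x i j hj
    refine hzero x i j ?_ ?_
    · intro h
      have := congrArg PNat.val h
      omega
    · rw [lt_abs]
      omega
  have hband' : ∀ (x : X) (i j : ℕ+), (i : ℕ) ≠ (j : ℕ) → (i : ℕ) ≤ (j : ℕ) + (m : ℕ) →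
      (j : ℕ) ≤ (i : ℕ) + (m : ℕ) → 0 < q i j x ∧ q i j x ≤ M := by
    intro x i j h1 h2 h3
    refine hband x i j (fun h => h1 (congrArg PNat.val h)) (abs_le.2 ⟨by omega, by omega⟩)
  have hα' : ∀ (x : X) (i j : ℕ+), (m : ℕ) < (i : ℕ) → (i : ℕ) ≤ (j : ℕ) + (m : ℕ) →
      (j : ℕ) < (i : ℕ) → α ≤ q i j x :=
    fun x i j h1 h2 h3 => hα x i j h1 (by omega) (by omega)
  have hβ' : ∀ (x : X) (i j : ℕ+), (m : ℕ) < (i : ℕ) → (i : ℕ) < (j : ℕ) →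
      (j : ℕ) ≤ (i : ℕ) + (m : ℕ) → q i j x ≤ β :=
    fun x i j h1 h2 h3 => hβ x i j h1 (by omega) (by omega)
  -- the two instances of aux_band
  have main1 := fun (x : X) (i : ℕ+) =>
    aux_band (m : ℕ) i (fun j => q i j x) (fun j hj => hvanq x i j hj)
  have main2 := fun (x : X) (i : ℕ+) =>
    aux_band (m : ℕ) i (fun j => ((j : ℝ) ^ 2 - (i : ℝ) ^ 2) * q i j x)
      (fun j hj => by
        show ((j : ℝ) ^ 2 - (i : ℝ) ^ 2) * q i j x = 0
        rw [hvanq x i j hj, mul_zero])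
  -- cardinality bound
  have hcard : ∀ i : ℕ+,
      ((Finset.Icc ((i : ℕ) - (m : ℕ)) ((i : ℕ) + (m : ℕ))).erase (i : ℕ)).card ≤ 2 * (m : ℕ) := by
    intro i
    rw [Finset.card_erase_of_mem (by simp only [Finset.mem_Icc]; omega), Nat.card_Icc]
    have := i.property
    omega
  -- the crude bound, for all i
  have hcrude : ∀ (x : X) (i : ℕ+), (i : ℕ) ≤ (m : ℕ) →
      (∑ j ∈ (Finset.Icc ((i : ℕ) - (m : ℕ)) ((i : ℕ) + (m : ℕ))).erase (i : ℕ),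
        (if h : 0 < j then (((⟨j, h⟩ : ℕ+) : ℝ) ^ 2 - (i : ℝ) ^ 2) * q i ⟨j, h⟩ x else 0))
      ≤ 6 * (m : ℝ) ^ 3 * M := by
    intro x i hi
    have hb : ∀ j ∈ (Finset.Icc ((i : ℕ) - (m : ℕ)) ((i : ℕ) + (m : ℕ))).erase (i : ℕ),
        (if h : 0 < j then (((⟨j, h⟩ : ℕ+) : ℝ) ^ 2 - (i : ℝ) ^ 2) * q i ⟨j, h⟩ x else 0)
        ≤ 3 * (m : ℝ) ^ 2 * M := by
      intro j hj
      simp only [Finset.mem_erase, Finset.mem_Icc] at hj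
      split
      · next h =>
        obtain ⟨hq1, hq2⟩ := hband' x i ⟨j, h⟩ (by simpa using fun hh => hj.1 hh.symm)
          (by show (i:ℕ) ≤ j + (m:ℕ); omega) (by show j ≤ (i:ℕ) + (m:ℕ); omega)
        have hcj : ((⟨j, h⟩ : ℕ+) : ℝ) = (j : ℝ) := rfl
        rw [hcj]
        have hjle : (j : ℝ) ≤ ((i : ℕ) : ℝ) + ((m : ℕ) : ℝ) := by
          have : j ≤ (i : ℕ) + (m : ℕ) := by omega
          exact_mod_cast this
        have him : ((i : ℕ) : ℝ) ≤ ((m : ℕ) : ℝ) := by exact_mod_cast hi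
        have hj0 : (0 : ℝ) ≤ (j : ℝ) := by positivity
        rcases le_or_gt ((j : ℝ) ^ 2) ((i : ℝ) ^ 2) with hc | hc
        · have : ((j : ℝ) ^ 2 - (i : ℝ) ^ 2) * q i ⟨j, h⟩ x ≤ 0 :=
            mul_nonpos_of_nonpos_of_nonneg (by linarith) hq1.le
          have : (0:ℝ) ≤ 3 * ((m : ℕ) : ℝ) ^ 2 * M := by positivity
          linarith
        · have hcle : (j : ℝ) ^ 2 - (i : ℝ) ^ 2 ≤ 3 * ((m : ℕ) : ℝ) ^ 2 := by
            have hi0 : (0 : ℝ) ≤ ((i : ℕ) : ℝ) := by positivity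
            have : (i : ℝ) = ((i : ℕ) : ℝ) := rfl
            rw [this]
            nlinarith
          calc ((j : ℝ) ^ 2 - (i : ℝ) ^ 2) * q i ⟨j, h⟩ x
              ≤ ((j : ℝ) ^ 2 - (i : ℝ) ^ 2) * M := by
                apply mul_le_mul_of_nonneg_left hq2
                linarith [hc]
            _ ≤ 3 * ((m : ℕ) : ℝ) ^ 2 * M := by
                apply mul_le_mul_of_nonneg_right hcle hM.le
      · positivity
    calc (∑ j ∈ (Finset.Icc ((i : ℕ) - (m : ℕ)) ((i : ℕ) + (m : ℕ))).erase (i : ℕ),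
          (if h : 0 < j then (((⟨j, h⟩ : ℕ+) : ℝ) ^ 2 - (i : ℝ) ^ 2) * q i ⟨j, h⟩ x else 0))
        ≤ ((Finset.Icc ((i : ℕ) - (m : ℕ)) ((i : ℕ) + (m : ℕ))).erase (i : ℕ)).card
            • (3 * (m : ℝ) ^ 2 * M) := Finset.sum_le_card_nsmul _ _ _ hb
      _ ≤ 6 * (m : ℝ) ^ 3 * M := by
        rw [nsmul_eq_mul]
        have h1 : ((((Finset.Icc ((i : ℕ) - (m : ℕ)) ((i : ℕ) + (m : ℕ))).erase (i : ℕ)).card : ℝ))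
            ≤ 2 * ((m : ℕ) : ℝ) := by exact_mod_cast hcard i
        have h2 : (0:ℝ) ≤ 3 * (m : ℝ) ^ 2 * M := by positivity
        have h3 : (m : ℝ) = ((m : ℕ) : ℝ) := rfl
        nlinarith
  -- the refined bound, for i > m
  have hub : ∀ (x : X) (i : ℕ+), (m : ℕ) < (i : ℕ) →
      (∑ j ∈ (Finset.Icc ((i : ℕ) - (m : ℕ)) ((i : ℕ) + (m : ℕ))).erase (i : ℕ),
        (if h : 0 < j then (((⟨j, h⟩ : ℕ+) : ℝ) ^ 2 - (i : ℝ) ^ 2) * q i ⟨j, h⟩ x else 0))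
      ≤ 2 * (m : ℝ) * (i : ℝ) * (β - α) + (m : ℝ) ^ 3 * (α + β) := by
    intro x i hi
    have hsplit : (Finset.Icc ((i : ℕ) - (m : ℕ)) ((i : ℕ) + (m : ℕ))).erase (i : ℕ)
        = ((Finset.Icc 1 (m : ℕ)).image (fun d => (i : ℕ) - d))
          ∪ ((Finset.Icc 1 (m : ℕ)).image (fun d => (i : ℕ) + d)) := by
      ext j
      simp only [Finset.mem_erase, Finset.mem_Icc, Finset.mem_union, Finset.mem_image]
      constructor
      · rintro ⟨hjn, hj1, hj2⟩
        rcases lt_or_gt_of_ne hjn with h | h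
        · exact Or.inl ⟨(i : ℕ) - j, by omega, by omega⟩
        · exact Or.inr ⟨j - (i : ℕ), by omega, by omega⟩
      · rintro (⟨d, hd, rfl⟩ | ⟨d, hd, rfl⟩) <;> omega
    have hdisj : Disjoint ((Finset.Icc 1 (m : ℕ)).image (fun d => (i : ℕ) - d))
        ((Finset.Icc 1 (m : ℕ)).image (fun d => (i : ℕ) + d)) := by
      rw [Finset.disjoint_left]
      intro a ha hb
      simp only [Finset.mem_image, Finset.mem_Icc] at ha hb
      obtain ⟨d1, hd1, h1⟩ := ha
      obtain ⟨d2, hd2, h2⟩ := hb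
      omega
    rw [hsplit, Finset.sum_union hdisj,
      Finset.sum_image (by intro a ha b hb h; simp only [Finset.coe_Icc, Set.mem_Icc, Finset.mem_Icc] at ha hb; dsimp only at h; omega),
      Finset.sum_image (by intro a ha b hb h; simp only [Finset.coe_Icc, Set.mem_Icc, Finset.mem_Icc] at ha hb; dsimp only at h; omega),
      ← Finset.sum_add_distrib]
    have hperd : ∀ d ∈ Finset.Icc 1 (m : ℕ),
        ((if h : 0 < (i : ℕ) - d then
            (((⟨(i : ℕ) - d, h⟩ : ℕ+) : ℝ) ^ 2 - (i : ℝ) ^ 2) * q i ⟨(i : ℕ) - d, h⟩ x else 0)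
          + (if h : 0 < (i : ℕ) + d then
            (((⟨(i : ℕ) + d, h⟩ : ℕ+) : ℝ) ^ 2 - (i : ℝ) ^ 2) * q i ⟨(i : ℕ) + d, h⟩ x else 0))
        ≤ 2 * ((i : ℕ) : ℝ) * (β - α) + ((m : ℕ) : ℝ) ^ 2 * (α + β) := by
      intro d hd
      simp only [Finset.mem_Icc] at hd
      have h1 : 0 < (i : ℕ) - d := by omega
      have h2 : 0 < (i : ℕ) + d := by omega
      rw [dif_pos h1, dif_pos h2]
      have hqd : α ≤ q i ⟨(i : ℕ) - d, h1⟩ x :=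
        hα' x i ⟨(i : ℕ) - d, h1⟩ hi (by show (i:ℕ) ≤ ((i:ℕ) - d) + (m:ℕ); omega)
          (by show (i : ℕ) - d < (i : ℕ); omega)
      have hqu : q i ⟨(i : ℕ) + d, h2⟩ x ≤ β :=
        hβ' x i ⟨(i : ℕ) + d, h2⟩ hi (by show (i : ℕ) < (i : ℕ) + d; omega)
          (by show (i:ℕ) + d ≤ (i:ℕ) + (m:ℕ); omega)
      have hc1 : ((⟨(i : ℕ) - d, h1⟩ : ℕ+) : ℝ) = ((i : ℕ) : ℝ) - (d : ℝ) := by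
        have : ((⟨(i : ℕ) - d, h1⟩ : ℕ+) : ℝ) = (((i : ℕ) - d : ℕ) : ℝ) := rfl
        rw [this, Nat.cast_sub (by omega)]
      have hc2 : ((⟨(i : ℕ) + d, h2⟩ : ℕ+) : ℝ) = ((i : ℕ) : ℝ) + (d : ℝ) := by
        have : ((⟨(i : ℕ) + d, h2⟩ : ℕ+) : ℝ) = (((i : ℕ) + d : ℕ) : ℝ) := rfl
        rw [this, Nat.cast_add]
      have hci : (i : ℝ) = ((i : ℕ) : ℝ) := rfl
      rw [hc1, hc2, hci]
      set n : ℝ := ((i : ℕ) : ℝ) with hn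
      set D : ℝ := (d : ℝ) with hD
      set K : ℝ := ((m : ℕ) : ℝ) with hK
      have hD1 : (1 : ℝ) ≤ D := by rw [hD]; exact_mod_cast hd.1
      have hDK : D ≤ K := by rw [hD, hK]; exact_mod_cast hd.2
      have hKn : K < n := by rw [hK, hn]; exact_mod_cast hi
      have hn0 : (0 : ℝ) ≤ n := by rw [hn]; positivity
      have e1 : ((n - D) ^ 2 - n ^ 2) * q i ⟨(i : ℕ) - d, h1⟩ x ≤ ((n - D) ^ 2 - n ^ 2) * α :=
        mul_le_mul_of_nonpos_left hqd (by nlinarith)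
      have e2 : ((n + D) ^ 2 - n ^ 2) * q i ⟨(i : ℕ) + d, h2⟩ x ≤ ((n + D) ^ 2 - n ^ 2) * β :=
        mul_le_mul_of_nonneg_left hqu (by nlinarith)
      have e3 : 2 * n * D * (β - α) ≤ 2 * n * 1 * (β - α) :=
        mul_le_mul_of_nonpos_right (by nlinarith) (by linarith)
      have e4 : D ^ 2 * (α + β) ≤ K ^ 2 * (α + β) :=
        mul_le_mul_of_nonneg_right (by nlinarith) hab
      nlinarith [e1, e2, e3, e4]
    calc (∑ d ∈ Finset.Icc 1 (m : ℕ),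
          ((if h : 0 < (i : ℕ) - d then
              (((⟨(i : ℕ) - d, h⟩ : ℕ+) : ℝ) ^ 2 - (i : ℝ) ^ 2) * q i ⟨(i : ℕ) - d, h⟩ x else 0)
            + (if h : 0 < (i : ℕ) + d then
              (((⟨(i : ℕ) + d, h⟩ : ℕ+) : ℝ) ^ 2 - (i : ℝ) ^ 2) * q i ⟨(i : ℕ) + d, h⟩ x else 0)))
        ≤ ∑ _d ∈ Finset.Icc 1 (m : ℕ),
            (2 * ((i : ℕ) : ℝ) * (β - α) + ((m : ℕ) : ℝ) ^ 2 * (α + β)) :=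
          Finset.sum_le_sum hperd
      _ = ((m : ℕ) : ℝ) * (2 * ((i : ℕ) : ℝ) * (β - α) + ((m : ℕ) : ℝ) ^ 2 * (α + β)) := by
          rw [Finset.sum_const, Nat.card_Icc, nsmul_eq_mul]
          norm_num
      _ ≤ 2 * (m : ℝ) * (i : ℝ) * (β - α) + (m : ℝ) ^ 3 * (α + β) := by
          have h3 : (m : ℝ) = ((m : ℕ) : ℝ) := rfl
          have h4 : (i : ℝ) = ((i : ℕ) : ℝ) := rfl
          rw [h3, h4]
          apply le_of_eq
          ring
  -- assemble
  refine ⟨fun x i => (main1 x i).1, ?_, fun x i => (main2 x i).1, ?_, ?_⟩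
  · -- (Q0) bound
    intro x i
    rw [(main1 x i).2]
    have hb : ∀ j ∈ (Finset.Icc ((i : ℕ) - (m : ℕ)) ((i : ℕ) + (m : ℕ))).erase (i : ℕ),
        (if h : 0 < j then q i ⟨j, h⟩ x else 0) ≤ M := by
      intro j hj
      simp only [Finset.mem_erase, Finset.mem_Icc] at hj
      split
      · next h =>
        exact (hband' x i ⟨j, h⟩ (by simpa using fun hh => hj.1 hh.symm)
          (by show (i:ℕ) ≤ j + (m:ℕ); omega) (by show j ≤ (i:ℕ) + (m:ℕ); omega)).2
      · exact hM.le
    calc (∑ j ∈ (Finset.Icc ((i : ℕ) - (m : ℕ)) ((i : ℕ) + (m : ℕ))).erase (i : ℕ),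
          (if h : 0 < j then q i ⟨j, h⟩ x else 0))
        ≤ ((Finset.Icc ((i : ℕ) - (m : ℕ)) ((i : ℕ) + (m : ℕ))).erase (i : ℕ)).card • M :=
          Finset.sum_le_card_nsmul _ _ _ hb
      _ ≤ 2 * (m : ℝ) * M := by
          rw [nsmul_eq_mul]
          have h1 : ((((Finset.Icc ((i : ℕ) - (m : ℕ)) ((i : ℕ) + (m : ℕ))).erase (i : ℕ)).card : ℝ))
              ≤ 2 * ((m : ℕ) : ℝ) := by exact_mod_cast hcard i
          have h3 : (m : ℝ) = ((m : ℕ) : ℝ) := rfl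
          rw [h3]
          nlinarith
  · -- uniform bound for weighted sums
    refine ⟨max (6 * (m : ℝ) ^ 3 * M) ((m : ℝ) ^ 3 * (α + β)), fun x i => ?_⟩
    rw [(main2 x i).2]
    rcases le_or_gt (i : ℕ) (m : ℕ) with h | h
    · exact le_trans (hcrude x i h) (le_max_left _ _)
    · refine le_trans (hub x i h) (le_trans ?_ (le_max_right _ _))
      have h1 : 2 * (m : ℝ) * (i : ℝ) * (β - α) ≤ 0 := by
        apply mul_nonpos_of_nonneg_of_nonpos ?_ (by linarith)
        have h3 : (m : ℝ) = ((m : ℕ) : ℝ) := rfl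
        have h4 : (i : ℝ) = ((i : ℕ) : ℝ) := rfl
        rw [h3, h4]
        positivity
      linarith
  · -- limit -∞
    intro C
    set R : ℝ := ((m : ℝ) ^ 3 * (α + β) - C) / (2 * (m : ℝ) * (α - β)) with hR
    refine ⟨⟨max ((m : ℕ) + 1) (⌈R⌉₊ + 1), by omega⟩, fun i hi x => ?_⟩
    have hiN : max ((m : ℕ) + 1) (⌈R⌉₊ + 1) ≤ (i : ℕ) := hi
    have him : (m : ℕ) < (i : ℕ) := by omega
    rw [(main2 x i).2]
    refine le_trans (hub x i him) ?_
    have hmpos : (0 : ℝ) < (m : ℝ) := by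
      have h3 : (m : ℝ) = ((m : ℕ) : ℝ) := rfl
      rw [h3]
      exact_mod_cast m.property
    have hden : (0 : ℝ) < 2 * (m : ℝ) * (α - β) := by nlinarith
    have hiR : R ≤ (i : ℝ) := by
      have h4 : (i : ℝ) = ((i : ℕ) : ℝ) := rfl
      have h5 : (⌈R⌉₊ : ℝ) + 1 ≤ ((i : ℕ) : ℝ) := by
        have : ⌈R⌉₊ + 1 ≤ (i : ℕ) := by omega
        exact_mod_cast this
      have h6 : R ≤ (⌈R⌉₊ : ℝ) := Nat.le_ceil R
      rw [h4]
      linarith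
    have h1 : 2 * (m : ℝ) * (β - α) * (i : ℝ) ≤ 2 * (m : ℝ) * (β - α) * R :=
      mul_le_mul_of_nonpos_left hiR (by nlinarith)
    have h2 : 2 * (m : ℝ) * (β - α) * R = C - (m : ℝ) ^ 3 * (α + β) := by
      rw [hR]
      rw [mul_div_assoc', div_eq_iff hden.ne']
      ring
    nlinarith [h1, h2]
end
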